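/- Let F be a field, A ⊆ F a finite set, 𝒜 = {A_1,...,A_m} a partition of A, and h(x) = ∏_{a∈A}(x−a). Let α_1,...,α_m be distinct nonzero elements of F and let g be the polynomial of degree < |A| satisfying g(α) = α_i for all α ∈ A_i, i = 1,...,m. Then the m polynomials g^j mod h, j = 0, 1, ..., m−1, form a basis of F_𝒜[x]. -/

import Mathlib

open Polynomial

/-- Let `h(x) = ∏_{a ∈ A}(x - a)`, let `α_1, ..., α_m` (here `c i`) be distinct nonzero field
elements and `g` the polynomial of degree `< |A|` with `g ≡ c i` on the block `A_i` of the
partition.  Then the polynomials `g^j mod h`, `j = 0, ..., m-1`, form a basis of `F_𝒜[x]`. -/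
theorem stmt_11 {F : Type*} [Field F] [DecidableEq F]
    (A : Finset F) (m : ℕ) (B : Fin m → Finset F)
    (hBne : ∀ i, (B i).Nonempty)
    (hBdisj : ∀ i j, i ≠ j → Disjoint (B i) (B j))
    (hBunion : Finset.univ.biUnion B = A)
    (h : Polynomial F) (hh : h = ∏ a ∈ A, (Polynomial.X - Polynomial.C a))
    (c : Fin m → F) (hcnz : ∀ i, c i ≠ 0) (hcinj : Function.Injective c)
    (g : Polynomial F) (hgdeg : g.degree < (A.card : WithBot ℕ))
    (hgval : ∀ i, ∀ α ∈ B i, g.eval α = c i)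
    (S : Set (Polynomial F))
    (hS : S = {f | f.degree < (A.card : WithBot ℕ) ∧
      ∀ i, ∀ α ∈ B i, ∀ β ∈ B i, f.eval α = f.eval β})
    (G : Fin m → Polynomial F) (hG : ∀ j, G j = (g ^ (j : ℕ)) % h) :
    LinearIndependent F G ∧
    (∀ j, G j ∈ S) ∧
    (∀ f ∈ S, f ∈ Submodule.span F (Set.range G)) := by
  -- basic facts about h
  have hmonic : h.Monic := by
    rw [hh]; exact monic_prod_of_monic _ _ (fun a _ => monic_X_sub_C a)
  have hdegh : h.degree = (A.card : WithBot ℕ) := by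
    rw [hh, degree_prod]
    simp [degree_X_sub_C]
  have hmod : ∀ p : Polynomial F, p % h = p %ₘ h := by
    intro p
    rw [Polynomial.mod_def, hmonic.leadingCoeff, inv_one, map_one, mul_one]
  have hevalh : ∀ a ∈ A, h.eval a = 0 := by
    intro a ha
    rw [hh, eval_prod]
    exact Finset.prod_eq_zero ha (by simp)
  have hBsub : ∀ i, ∀ a ∈ B i, a ∈ A := by
    intro i a ha
    rw [← hBunion]
    exact Finset.mem_biUnion.mpr ⟨i, Finset.mem_univ i, ha⟩
  -- evaluation of p % h agrees with p on A
  have hmodeval : ∀ (p : Polynomial F), ∀ a ∈ A, (p % h).eval a = p.eval a := by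
    intro p a ha
    conv_rhs => rw [← Polynomial.modByMonic_add_div p h]
    rw [hmod, eval_add, eval_mul, hevalh a ha, zero_mul, add_zero]
  -- degree of G j
  have hGdeg : ∀ j, (G j).degree < (A.card : WithBot ℕ) := by
    intro j
    rw [hG, hmod, ← hdegh]
    exact degree_modByMonic_lt _ hmonic
  -- evaluation of G j on blocks
  have hGeval : ∀ j i, ∀ α ∈ B i, (G j).eval α = c i ^ (j : ℕ) := by
    intro j i α hα
    rw [hG, hmodeval _ _ (hBsub i α hα), eval_pow, hgval i α hα]
  -- key: a polynomial of degree < |A| vanishing on A is zero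
  have hkey : ∀ p : Polynomial F, p.degree < (A.card : WithBot ℕ) →
      (∀ a ∈ A, p.eval a = 0) → p = 0 := by
    intro p hdeg hz
    by_cases hp : p = 0
    · exact hp
    · refine Polynomial.eq_zero_of_natDegree_lt_card_of_eval_eq_zero' p A hz ?_
      rwa [Polynomial.natDegree_lt_iff_degree_lt hp]
  -- evaluation of a sum
  have hsumeval : ∀ (t : Fin m → F) (i : Fin m), ∀ α ∈ B i,
      (∑ j, t j • G j).eval α = ∑ j, t j * c i ^ (j : ℕ) := by
    intro t i α hα
    rw [eval_finset_sum]
    exact Finset.sum_congr rfl fun j _ => by rw [eval_smul, hGeval j i α hα, smul_eq_mul]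
  refine ⟨?_, ?_, ?_⟩
  · -- linear independence
    rw [Fintype.linearIndependent_iff]
    intro t ht
    have hz : ∀ i, ∑ j, t j * c i ^ (j : ℕ) = 0 := by
      intro i
      obtain ⟨α, hα⟩ := hBne i
      rw [← hsumeval t i α hα, ht, eval_zero]
    have := Matrix.eq_zero_of_forall_index_sum_mul_pow_eq_zero hcinj hz
    exact fun j => congrFun this j
  · -- membership in S
    intro j
    rw [hS]
    refine ⟨hGdeg j, fun i α hα β hβ => ?_⟩
    rw [hGeval j i α hα, hGeval j i β hβ]
  · -- spanning
    intro f hf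
    rw [hS] at hf
    obtain ⟨hfdeg, hfconst⟩ := hf
    -- values on blocks
    set v : Fin m → F := fun i => f.eval (hBne i).choose with hv
    -- solve the Vandermonde system
    set M : Matrix (Fin m) (Fin m) F := Matrix.vandermonde c with hM
    have hdet : M.det ≠ 0 := Matrix.det_vandermonde_ne_zero_iff.mpr hcinj
    have hMunit : IsUnit M.det := isUnit_iff_ne_zero.mpr hdet
    set t : Fin m → F := M⁻¹.mulVec v with htdef
    have hMt : M.mulVec t = v := by
      rw [htdef, Matrix.mulVec_mulVec, Matrix.mul_nonsing_inv M hMunit, Matrix.one_mulVec]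
    have hMt' : ∀ i, ∑ j, t j * c i ^ (j : ℕ) = v i := by
      intro i
      rw [← congrFun hMt i]
      simp only [Matrix.mulVec, dotProduct, hM, Matrix.vandermonde]
      exact Finset.sum_congr rfl fun j _ => by rw [mul_comm]; rfl
    -- the candidate combination
    have heq : f = ∑ j, t j • G j := by
      have hdeg2 : (∑ j, t j • G j).degree < (A.card : WithBot ℕ) := by
        refine lt_of_le_of_lt (Polynomial.degree_sum_le _ _) ?_
        rw [Finset.sup_lt_iff (by exact WithBot.bot_lt_coe _)]
        intro j _
        exact lt_of_le_of_lt (Polynomial.degree_smul_le _ _) (hGdeg j)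
      have hdiff : f - ∑ j, t j • G j = 0 := by
        refine hkey _ (lt_of_le_of_lt (Polynomial.degree_sub_le _ _)
          (max_lt hfdeg hdeg2)) ?_
        intro a ha
        obtain ⟨i, _, hai⟩ := Finset.mem_biUnion.mp (hBunion ▸ ha)
        have h1 : f.eval a = v i := hfconst i a hai (hBne i).choose (hBne i).choose_spec
        rw [eval_sub, h1, hsumeval t i a hai, hMt' i, sub_self]
      exact sub_eq_zero.mp hdiff
    rw [heq]
    exact Submodule.sum_mem _ fun j _ =>
      Submodule.smul_mem _ _ (Submodule.subset_span ⟨j, rfl⟩)
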